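/- arXiv:1711.02051 — 3 statements merged into one kernel-verified Lean document; each statement's English description precedes it below -/
import Mathlib

section
/- Let A and B be categories with finite coproducts and F : A ⥤ B a functor that preserves initial objects. If there exists a natural isomorphism with components F(x) ⨿ F(y) ≅ F(x ⨿ y) (natural in x and y, not assumed to be the canonical comparison map), then F preserves binary coproducts, i.e. the canonical comparison morphism F(x) ⨿ F(y) ⟶ F(x ⨿ y) induced by the images of the coproduct injections is an isomorphism for all x, y. -/
open CategoryTheory Limits

/-- A functor between categories with finite coproducts which preserves initial objects
and admits a (possibly non-canonical) natural isomorphism `F x ⨿ F y ≅ F (x ⨿ y)`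
preserves binary coproducts. -/
theorem stmt1 {A : Type*} [Category A] {B : Type*} [Category B]
    [HasFiniteCoproducts A] [HasFiniteCoproducts B]
    (F : A ⥤ B) [PreservesColimit (Functor.empty A) F]
    (φ : ∀ x y : A, (F.obj x ⨿ F.obj y) ≅ F.obj (x ⨿ y))
    (hφ : ∀ {x x' y y' : A} (f : x ⟶ x') (g : y ⟶ y'),
      coprod.map (F.map f) (F.map g) ≫ (φ x' y').hom
        = (φ x y).hom ≫ F.map (coprod.map f g)) :
    ∀ x y : A, IsIso (coprodComparison F x y) := by
  -- transfer initial-preservation across empty-diagram universes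
  haveI : PreservesColimitsOfShape (Discrete PEmpty) F :=
    ⟨fun {K} => preservesColimit_of_iso_diagram F (Functor.emptyExt (Functor.empty A) K)⟩
  haveI : PreservesColimitsOfShape (Discrete PEmpty.{1}) F :=
    preservesColimitsOfShape_of_equiv emptyEquivalence F
  intro x y
  -- isos collapsing coproducts with `F.obj (⊥_ A)`, which is initial
  let ψx : (F.obj x ⨿ F.obj (⊥_ A)) ≅ F.obj x :=
    coprod.mapIso (Iso.refl _) (PreservesInitial.iso F) ≪≫ coprod.rightUnitor _
  let ψy : (F.obj (⊥_ A) ⨿ F.obj y) ≅ F.obj y :=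
    coprod.mapIso (PreservesInitial.iso F) (Iso.refl _) ≪≫ coprod.leftUnitor _
  have hψx : ψx.inv = coprod.inl := by
    rw [← cancel_mono ψx.hom]; simp [ψx]
  have hψy : ψy.inv = coprod.inr := by
    rw [← cancel_mono ψy.hom]; simp [ψy]
  -- endomorphisms of `F.obj x` and `F.obj y`, which are isos
  let ex : F.obj x ⟶ F.obj x :=
    F.map (coprod.inl : x ⟶ x ⨿ ⊥_ A) ≫ (φ x (⊥_ A)).inv ≫ ψx.hom
  let ey : F.obj y ⟶ F.obj y :=
    F.map (coprod.inr : y ⟶ (⊥_ A) ⨿ y) ≫ (φ (⊥_ A) y).inv ≫ ψy.hom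
  have hinl : IsIso (coprod.inl : x ⟶ x ⨿ ⊥_ A) := by
    have : (coprod.inl : x ⟶ x ⨿ ⊥_ A) = (coprod.rightUnitor x).inv := rfl
    rw [this]; infer_instance
  have hinr : IsIso (coprod.inr : y ⟶ (⊥_ A) ⨿ y) := by
    have : (coprod.inr : y ⟶ (⊥_ A) ⨿ y) = (coprod.leftUnitor y).inv := rfl
    rw [this]; infer_instance
  have hex : IsIso ex := by dsimp only [ex]; infer_instance
  have hey : IsIso ey := by dsimp only [ey]; infer_instance
  -- the comparison map factors as an iso
  have key : coprodComparison F x y = coprod.map ex ey ≫ (φ x y).hom := by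
    apply coprod.hom_ext
    · have h := hφ (𝟙 x) (initial.to y)
      have hl : F.map (coprod.inl : x ⟶ x ⨿ y)
          = F.map (coprod.inl : x ⟶ x ⨿ ⊥_ A) ≫ F.map (coprod.map (𝟙 x) (initial.to y)) := by
        rw [← F.map_comp, coprod.inl_map, Category.id_comp]
      rw [coprodComparison, coprod.inl_desc, coprod.inl_map_assoc, hl, ← Iso.inv_comp_eq] at *
      rw [← h]
      have hcol : ψx.hom ≫ (coprod.inl : F.obj x ⟶ F.obj x ⨿ F.obj y)
          = coprod.map (𝟙 (F.obj x)) (F.map (initial.to y)) := by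
        rw [← cancel_epi ψx.inv]
        simp [hψx, ψx]
        exact coprod.inl_desc _ _
      simp only [ex, Category.assoc, reassoc_of% hcol, F.map_id]
    · have h := hφ (initial.to x) (𝟙 y)
      have hr : F.map (coprod.inr : y ⟶ x ⨿ y)
          = F.map (coprod.inr : y ⟶ (⊥_ A) ⨿ y) ≫ F.map (coprod.map (initial.to x) (𝟙 y)) := by
        rw [← F.map_comp, coprod.inr_map, Category.id_comp]
      rw [coprodComparison, coprod.inr_desc, coprod.inr_map_assoc, hr, ← Iso.inv_comp_eq] at *
      rw [← h]
      have hcor : ψy.hom ≫ (coprod.inr : F.obj y ⟶ F.obj x ⨿ F.obj y)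
          = coprod.map (F.map (initial.to x)) (𝟙 (F.obj y)) := by
        rw [← cancel_epi ψy.inv]
        simp [hψy, ψy]
        exact coprod.inr_desc _ _
      simp only [ey, Category.assoc, reassoc_of% hcor, F.map_id]
  rw [key]
  infer_instance
end

section
/- Let B be a category with finite products and finite coproducts. If there exists an isomorphism of bifunctors with components φ_{x,y} : x ⨿ y ≅ x × y (natural in x and y, not assumed canonical in any way), then B is semi-additive: B has a zero object, and for all x, y the canonical morphism x ⨿ y ⟶ x × y (whose components are (𝟙_x, 0), (0, 𝟙_y)) is an isomorphism. -/
open CategoryTheory Limits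

/-- A category with finite products and coproducts admitting a natural isomorphism
`x ⨿ y ≅ x × y` is semi-additive: the initial object is a zero object and the
canonical morphism `x ⨿ y ⟶ x × y` (with matrix `(𝟙, 0; 0, 𝟙)`) is invertible. -/
theorem stmt7 {B : Type*} [Category B] [HasFiniteProducts B] [HasFiniteCoproducts B]
    (φ : ∀ x y : B, (x ⨿ y) ≅ (x ⨯ y))
    (hφ : ∀ {x x' y y' : B} (f : x ⟶ x') (g : y ⟶ y'),
      coprod.map f g ≫ (φ x' y').hom = (φ x y).hom ≫ prod.map f g) :
    ∃ hz : IsZero (⊥_ B), ∀ x y : B,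
      IsIso (coprod.desc
        (prod.lift (𝟙 x) (hz.from_ x ≫ hz.to_ y))
        (prod.lift (hz.from_ y ≫ hz.to_ x) (𝟙 y))) := by
  -- the initial object is terminal, hence a zero object
  have e : (⊥_ B) ≅ (⊤_ B) :=
    ((prod.rightUnitor (⊥_ B)).symm ≪≫ (φ (⊥_ B) (⊤_ B)).symm ≪≫
      coprod.leftUnitor (⊤_ B))
  have hterm : IsTerminal (⊥_ B) := IsTerminal.ofIso terminalIsTerminal e.symm
  have hz : IsZero (⊥_ B) :=
    { unique_to := fun Y => ⟨⟨⟨initial.to Y⟩, fun f => initial.hom_ext f _⟩⟩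
      unique_from := fun Y => ⟨⟨⟨hterm.from Y⟩, fun f => hterm.hom_ext f _⟩⟩ }
  refine ⟨hz, fun x y => ?_⟩
  -- diagonal entries of φ
  set α : ∀ x : B, x ⟶ x :=
    fun x => coprod.inl ≫ (φ x (⊥_ B)).hom ≫ prod.fst with hα
  set β : ∀ y : B, y ⟶ y :=
    fun y => coprod.inr ≫ (φ (⊥_ B) y).hom ≫ prod.snd with hβ
  -- coprod.inl : x ⟶ x ⨿ ⊥ and prod.fst : x ⨯ ⊥ ⟶ x are isos
  have hinl : ∀ x : B, IsIso (coprod.inl : x ⟶ x ⨿ (⊥_ B)) := by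
    intro x
    refine ⟨coprod.desc (𝟙 x) (hz.to_ x), by exact coprod.inl_desc _ _, ?_⟩
    apply coprod.hom_ext <;> simp
    · exact coprod.inl_desc _ _
    exact hz.eq_of_src _ _
  have hfst : ∀ x : B, IsIso (prod.fst : x ⨯ (⊥_ B) ⟶ x) := by
    intro x
    refine ⟨prod.lift (𝟙 x) (hz.from_ x), ?_, by exact prod.lift_fst _ _⟩
    apply Limits.prod.hom_ext
    · simp; exact prod.lift_fst _ _
    · exact hz.eq_of_tgt _ _
  have hinr : ∀ y : B, IsIso (coprod.inr : y ⟶ (⊥_ B) ⨿ y) := by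
    intro y
    refine ⟨coprod.desc (hz.to_ y) (𝟙 y), by exact coprod.inr_desc _ _, ?_⟩
    apply coprod.hom_ext <;> simp
    exact hz.eq_of_src _ _
    exact coprod.inr_desc _ _
  have hsnd : ∀ y : B, IsIso (prod.snd : (⊥_ B) ⨯ y ⟶ y) := by
    intro y
    refine ⟨prod.lift (hz.from_ y) (𝟙 y), ?_, by exact prod.lift_snd _ _⟩
    apply Limits.prod.hom_ext
    · exact hz.eq_of_tgt _ _
    · simp; exact prod.lift_snd _ _
  have hαiso : ∀ x : B, IsIso (α x) := by
    intro x
    have := hinl x; have := hfst x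
    rw [hα]; infer_instance
  have hβiso : ∀ y : B, IsIso (β y) := by
    intro y
    have := hinr y; have := hsnd y
    rw [hβ]; infer_instance
  -- the rows of φ
  have row1 : coprod.inl ≫ (φ x y).hom = prod.lift (α x) (hz.from_ x ≫ hz.to_ y) := by
    have nat := hφ (𝟙 x) (hz.to_ y)
    have h1 : coprod.inl ≫ (φ x y).hom = (coprod.inl ≫ coprod.map (𝟙 x) (hz.to_ y)) ≫ (φ x y).hom := by
      simp
    rw [h1, Category.assoc, nat]
    apply Limits.prod.hom_ext
    · simp [hα]; exact (prod.lift_fst _ _).symm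
    · simp only [Category.assoc, prod.lift_snd, prod.map_snd]
      rw [← Category.assoc, ← Category.assoc]
      congr 1
      exact hz.eq_of_tgt _ _
  have row2 : coprod.inr ≫ (φ x y).hom = prod.lift (hz.from_ y ≫ hz.to_ x) (β y) := by
    have nat := hφ (hz.to_ x) (𝟙 y)
    have h1 : coprod.inr ≫ (φ x y).hom = (coprod.inr ≫ coprod.map (hz.to_ x) (𝟙 y)) ≫ (φ x y).hom := by
      simp
    rw [h1, Category.assoc, nat]
    apply Limits.prod.hom_ext
    · simp only [Category.assoc, prod.lift_fst, prod.map_fst]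
      rw [← Category.assoc, ← Category.assoc]
      congr 1
      exact hz.eq_of_tgt _ _
    · simp [hβ]; exact (prod.lift_snd _ _).symm
  -- the canonical morphism is φ followed by an iso
  have := hαiso x; have := hβiso y
  have key : coprod.desc
      (prod.lift (𝟙 x) (hz.from_ x ≫ hz.to_ y))
      (prod.lift (hz.from_ y ≫ hz.to_ x) (𝟙 y)) =
      (φ x y).hom ≫ prod.map (inv (α x)) (inv (β y)) := by
    apply coprod.hom_ext
    · rw [← Category.assoc, row1]
      apply Limits.prod.hom_ext
      · simp; rw [coprod.inl_desc, prod.lift_fst, prod.lift_fst]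
      · simp only [Category.assoc, prod.lift_snd, prod.map_snd, coprod.inl_desc]
        rw [← Category.assoc, prod.lift_snd, Category.assoc]
        congr 1
        exact hz.eq_of_src _ _
    · rw [← Category.assoc, row2]
      apply Limits.prod.hom_ext
      · simp only [Category.assoc, prod.lift_fst, prod.map_fst, coprod.inr_desc]
        rw [← Category.assoc, prod.lift_fst, Category.assoc]
        congr 1
        exact hz.eq_of_src _ _
      · simp; rw [coprod.inr_desc, prod.lift_snd, prod.lift_snd]
  rw [key]
  infer_instance
end

section
/- Let B be a category with finite products and coproducts admitting a natural isomorphism φ_{x,y} : x ⨿ y ≅ x × y. Then the initial object of B is also terminal, i.e. B has a zero object. -/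
open CategoryTheory Limits

/-- A category with finite products and coproducts admitting a natural isomorphism
`x ⨿ y ≅ x × y` has a zero object: its initial object is also terminal. -/
theorem stmt8 {B : Type*} [Category B] [HasFiniteProducts B] [HasFiniteCoproducts B]
    (φ : ∀ x y : B, (x ⨿ y) ≅ (x ⨯ y))
    (hφ : ∀ {x x' y y' : B} (f : x ⟶ x') (g : y ⟶ y'),
      coprod.map f g ≫ (φ x' y').hom = (φ x y).hom ≫ prod.map f g) :
    IsZero (⊥_ B) := by
  -- every object admits a morphism to the initial object
  have to_bot : ∀ x : B, x ⟶ ⊥_ B := fun x =>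
    coprod.inr ≫ (φ (⊥_ B) x).hom ≫ prod.fst
  -- the two projections out of `⊥ ⨯ ⊥` agree
  have key : (prod.fst : (⊥_ B) ⨯ (⊥_ B) ⟶ ⊥_ B) = prod.snd := by
    rw [← cancel_epi (φ (⊥_ B) (⊥_ B)).hom]
    apply coprod.hom_ext <;>
      simp only [← Category.assoc] <;> exact initial.hom_ext _ _
  refine ⟨fun Y => ⟨⟨⟨initial.to Y⟩, fun f => initial.hom_ext f _⟩⟩,
    fun Y => ⟨⟨⟨to_bot Y⟩, fun f => ?_⟩⟩⟩
  have : prod.lift f (to_bot Y) ≫ prod.fst = prod.lift f (to_bot Y) ≫ prod.snd := by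
    rw [key]
  rw [prod.lift_fst, prod.lift_snd] at this
  exact this
end
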